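/- Suppose x, y, z are coprime integers with x^7 + y^7 = z^l for a prime l not equal to 2, 3, or 7, with z ≠ 0 and 7 dividing z. Then there exist nonzero coprime integers z_1, z_2 with 7(x + y) = z_1^l, H_7(x,y) = 7 z_2^l, and z = z_1 z_2, where H_7(x,y) = x^6 - x^5 y + x^4 y^2 - x^3 y^3 + x^2 y^4 - x y^5 + y^6. -/

import Mathlib

theorem factorization_77l_case_II (l : ℕ) (hl : l.Prime) (hl2 : l ≠ 2) (hl3 : l ≠ 3) (hl7 : l ≠ 7)
    (x y z : ℤ) (hxy : IsCoprime x y) (heq : x ^ 7 + y ^ 7 = z ^ l)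
    (hz : z ≠ 0) (h7 : (7 : ℤ) ∣ z) :
    ∃ z₁ z₂ : ℤ, z₁ ≠ 0 ∧ z₂ ≠ 0 ∧ IsCoprime z₁ z₂ ∧
      7 * (x + y) = z₁ ^ l ∧
      x ^ 6 - x ^ 5 * y + x ^ 4 * y ^ 2 - x ^ 3 * y ^ 3 + x ^ 2 * y ^ 4 - x * y ^ 5 + y ^ 6
        = 7 * z₂ ^ l ∧
      z = z₁ * z₂ := by
  have hodd : Odd l := hl.odd_of_ne_two hl2
  set H : ℤ := x ^ 6 - x ^ 5 * y + x ^ 4 * y ^ 2 - x ^ 3 * y ^ 3 + x ^ 2 * y ^ 4 - x * y ^ 5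
      + y ^ 6 with hH
  have hprod : (x + y) * H = z ^ l := by rw [hH, ← heq]; ring
  -- 7 ∣ x + y
  haveI : Fact (Nat.Prime 7) := ⟨by norm_num⟩
  have h7a : (7 : ℤ) ∣ x + y := by
    have hz0 : ((z : ZMod 7)) = 0 :=
      (ZMod.intCast_zmod_eq_zero_iff_dvd z 7).mpr (by exact_mod_cast h7)
    have h0 : ((x : ZMod 7)) + (y : ZMod 7) = 0 := by
      have h1 := congrArg (fun t : ℤ => (t : ZMod 7)) heq
      push_cast at h1
      rw [hz0] at h1
      rw [← ZMod.pow_card (x : ZMod 7), ← ZMod.pow_card (y : ZMod 7)]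
      simpa [zero_pow hl.ne_zero] using h1
    have : ((x + y : ℤ) : ZMod 7) = 0 := by push_cast; exact h0
    exact (ZMod.intCast_zmod_eq_zero_iff_dvd _ 7).mp this
  have h7y : ¬ (7 : ℤ) ∣ y := by
    intro hy
    have hx7 : (7 : ℤ) ∣ x := by
      have := dvd_sub h7a hy
      simpa using this
    exact absurd (hxy.isUnit_of_dvd' hx7 hy) (by norm_num [Int.isUnit_iff])
  -- H ≡ 7 y^6 mod 49
  obtain ⟨c, hc⟩ := h7a
  have h49 : H - 7 * y ^ 6 = 49 * (-3 * y ^ 5 * c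
      + c ^ 2 * (x ^ 4 - 3 * x ^ 3 * y + 6 * x ^ 2 * y ^ 2 - 10 * x * y ^ 3 + 15 * y ^ 4)) := by
    rw [hH]
    linear_combination (-21 * y ^ 5
      + (x ^ 4 - 3 * x ^ 3 * y + 6 * x ^ 2 * y ^ 2 - 10 * x * y ^ 3 + 15 * y ^ 4)
        * (x + y + 7 * c)) * hc
  set k : ℤ := -3 * y ^ 5 * c
      + c ^ 2 * (x ^ 4 - 3 * x ^ 3 * y + 6 * x ^ 2 * y ^ 2 - 10 * x * y ^ 3 + 15 * y ^ 4) with hk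
  set B : ℤ := y ^ 6 + 7 * k with hB
  have hHB : H = 7 * B := by rw [hB]; linarith [h49]
  have h7B : ¬ (7 : ℤ) ∣ B := by
    intro hb
    have hy6 : (7 : ℤ) ∣ y ^ 6 := by
      have : (7 : ℤ) ∣ y ^ 6 + 7 * k - 7 * k := dvd_sub (hB ▸ hb) ⟨k, rfl⟩
      simpa using this
    exact h7y (Int.Prime.dvd_pow' (by norm_num) hy6)
  -- product
  have hAB : (7 * (x + y)) * B = z ^ l := by
    rw [← hprod, hHB]; ring
  have ha0 : x + y ≠ 0 := by
    intro h0
    apply hz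
    have : z ^ l = 0 := by rw [← hprod, h0, zero_mul]
    exact pow_eq_zero_iff hl.ne_zero |>.mp this
  have hQ : H - 7 * y ^ 6 = (x + y) * (x ^ 5 - 2 * x ^ 4 * y + 3 * x ^ 3 * y ^ 2
      - 4 * x ^ 2 * y ^ 3 + 5 * x * y ^ 4 - 6 * y ^ 5) := by rw [hH]; ring
  -- coprimality of 7(x+y) and B
  have hcop : IsCoprime (7 * (x + y)) B := by
    rw [Int.isCoprime_iff_gcd_eq_one]
    by_contra hg
    obtain ⟨p, hp, hpd⟩ := Nat.exists_prime_and_dvd hg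
    have hpZ : Prime (p : ℤ) := Nat.prime_iff_prime_int.mp hp
    have hpA : (p : ℤ) ∣ 7 * (x + y) :=
      dvd_trans (Int.natCast_dvd_natCast.mpr hpd) (Int.gcd_dvd_left _ _)
    have hpB : (p : ℤ) ∣ B :=
      dvd_trans (Int.natCast_dvd_natCast.mpr hpd) (Int.gcd_dvd_right _ _)
    have hp7 : p ≠ 7 := by
      intro h
      apply h7B
      rw [h] at hpB
      exact_mod_cast hpB
    have hp7' : ¬ (p : ℤ) ∣ 7 := by
      intro h
      have : p ∣ 7 := by exact_mod_cast h
      exact hp7 ((Nat.prime_dvd_prime_iff_eq hp (by norm_num)).mp this)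
    rcases hpZ.dvd_mul.mp hpA with h | hpa
    · exact hp7' h
    · have hpH : (p : ℤ) ∣ H := hHB ▸ Dvd.dvd.mul_left hpB 7
      have hp7y6 : (p : ℤ) ∣ 7 * y ^ 6 := by
        have hd : (p : ℤ) ∣ H - (x + y) * (x ^ 5 - 2 * x ^ 4 * y + 3 * x ^ 3 * y ^ 2
            - 4 * x ^ 2 * y ^ 3 + 5 * x * y ^ 4 - 6 * y ^ 5) := dvd_sub hpH (hpa.mul_right _)
        have h2 : H - (x + y) * (x ^ 5 - 2 * x ^ 4 * y + 3 * x ^ 3 * y ^ 2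
            - 4 * x ^ 2 * y ^ 3 + 5 * x * y ^ 4 - 6 * y ^ 5) = 7 * y ^ 6 := by
          linarith [hQ]
        rwa [h2] at hd
      have hpy : (p : ℤ) ∣ y := by
        rcases hpZ.dvd_mul.mp hp7y6 with h | h
        · exact absurd h hp7'
        · exact hpZ.dvd_of_dvd_pow h
      have hpx : (p : ℤ) ∣ x := by
        have := dvd_sub hpa hpy
        simpa using this
      exact hpZ.not_unit (hxy.isUnit_of_dvd' hpx hpy)
  obtain ⟨⟨z₁, hz1⟩, ⟨z₂, hz2⟩⟩ := Int.eq_pow_of_mul_eq_pow_odd hcop hodd hAB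
  refine ⟨z₁, z₂, ?_, ?_, ?_, hz1, by rw [hHB, hz2], ?_⟩
  · intro h0; rw [h0, zero_pow hl.ne_zero] at hz1
    exact ha0 (by linarith)
  · intro h0; rw [h0, zero_pow hl.ne_zero] at hz2
    rw [hz2, mul_zero] at hAB
    exact hz (pow_eq_zero_iff hl.ne_zero |>.mp hAB.symm)
  · have hc2 : IsCoprime (z₁ ^ l) (z₂ ^ l) := by rwa [hz1, hz2] at hcop
    exact (hc2.of_isCoprime_of_dvd_left (dvd_pow_self z₁ hl.ne_zero)).of_isCoprime_of_dvd_right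
      (dvd_pow_self z₂ hl.ne_zero)
  · have hpow : (z₁ * z₂) ^ l = z ^ l := by rw [mul_pow, ← hz1, ← hz2, hAB]
    exact ((Odd.strictMono_pow (R := ℤ) hodd).injective hpow).symm
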